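/- Let (α₁, ..., α_p) be the maximal dominant orthogonal sequence for the cominuscule fundamental weight ϖ of a simple complex Lie algebra g of Hermitian type. Then ϖ - α₁ - ... - α_p is the lowest weight of the irreducible g-module with highest weight ϖ. -/

import Mathlib

open scoped RealInnerProductSpace

set_option maxHeartbeats 3200000 in
/-- Let `(α₁, ..., α_p)` be the maximal dominant orthogonal sequence for the
cominuscule fundamental weight `ϖ` of a simple complex Lie algebra of Hermitian type,
produced by the cascade algorithm (setup as in STATEMENT 6, plus the cominuscule condition
and the termination condition `⟨α_p^∨, ζ⟩ ≠ 0`).  Then `μ₀ = ϖ - α₁ - ⋯ - α_p` is the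
lowest weight of the irreducible module with highest weight `ϖ`: it is antidominant
(`⟨μ₀, β^∨⟩ ≤ 0` for every simple root `β`) and it lies in the Weyl orbit of `ϖ`. -/
theorem stmt6 {ι E : Type*} [Fintype ι] [DecidableEq ι] [NormedAddCommGroup E] [InnerProductSpace ℝ E]
    (b : Module.Basis ι ℝ E) (R : Finset E)
    (s : ℝ) (hs : 0 < s)
    (hR0 : ∀ α ∈ R, α ≠ 0)
    (hlen : ∀ α ∈ R, ‖α‖ = s ∨ ‖α‖ = Real.sqrt 2 * s)
    (hintR : ∀ α ∈ R, ∀ β ∈ R, ∃ z : ℤ, 2 * ⟪β, α⟫ / ⟪α, α⟫ = (z : ℝ))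
    (hrefl : ∀ α ∈ R, ∀ β ∈ R, β - (2 * ⟪β, α⟫ / ⟪α, α⟫) • α ∈ R)
    (hsimple : ∀ k : ι, b k ∈ R)
    (hsign : ∀ γ ∈ R, (∀ k, 0 ≤ b.repr γ k) ∨ (∀ k, b.repr γ k ≤ 0))
    (ζ : ι) (hζlong : ∀ β ∈ R, ‖β‖ ≤ ‖b ζ‖)
    (q : ℕ) (α : ℕ → E) (Pi' : ℕ → Set ι)
    (hPi0 : Pi' 0 = Set.univ)
    (hζmem : ∀ i < q, ζ ∈ Pi' i)
    (hhigh : ∀ i < q, α i ∈ R ∧ (↑(b.repr (α i)).support : Set ι) ⊆ Pi' i ∧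
      ∀ γ ∈ R, (↑(b.repr γ).support : Set ι) ⊆ Pi' i → ∀ k, b.repr γ k ≤ b.repr (α i) k)
    (hstep : ∀ i, i + 1 < q → Pi' (i + 1) =
      {k : ι | (k ∈ Pi' i ∧ ⟪α i, b k⟫ = 0) ∧
        Relation.ReflTransGen
          (fun a c => (a ∈ Pi' i ∧ ⟪α i, b a⟫ = 0) ∧ (c ∈ Pi' i ∧ ⟪α i, b c⟫ = 0) ∧
            ⟪b a, b c⟫ ≠ 0)
          ζ k})
    (hcom : ∀ γ ∈ R, b.repr γ ζ = -1 ∨ b.repr γ ζ = 0 ∨ b.repr γ ζ = 1)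
    (ϖ : E) (hϖ : ∀ k : ι, 2 * ⟪ϖ, b k⟫ / ⟪b k, b k⟫ = if k = ζ then 1 else 0)
    (hq : 0 < q) (hterm : ⟪α (q - 1), b ζ⟫ ≠ 0) :
    (∀ k : ι, 2 * ⟪ϖ - ∑ j ∈ Finset.range q, α j, b k⟫ / ⟪b k, b k⟫ ≤ 0) ∧
    (∃ w : E ≃ₗᵢ[ℝ] E, (∀ β ∈ R, w β ∈ R) ∧ w ϖ = ϖ - ∑ j ∈ Finset.range q, α j) := by
  classical
  -- ### basic positivity
  have hpos : ∀ γ ∈ R, (0:ℝ) < ⟪γ, γ⟫ := by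
    intro γ hγ
    rcases lt_or_eq_of_le (real_inner_self_nonneg (x := γ)) with h | h
    · exact h
    · exact absurd (real_inner_self_nonpos.1 h.ge) (hR0 γ hγ)
  have hb0 : ∀ k : ι, (0:ℝ) < ⟪b k, b k⟫ := fun k => hpos _ (hsimple k)
  have hαR : ∀ i, i < q → α i ∈ R := fun i hi => (hhigh i hi).1
  -- ### expansion of inner products along the basis
  have hexp : ∀ γ x : E, ⟪γ, x⟫ = ∑ k, b.repr γ k * ⟪b k, x⟫ := by
    intro γ x
    conv_lhs => rw [← b.sum_repr γ]
    rw [sum_inner]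
    simp [real_inner_smul_left]
  -- ### R is closed under negation
  have hneg : ∀ γ ∈ R, -γ ∈ R := by
    intro γ hγ
    have h := hrefl γ hγ γ hγ
    have h2 : 2 * ⟪γ, γ⟫ / ⟪γ, γ⟫ = 2 := by
      have hne : ⟪γ, γ⟫ ≠ 0 := ne_of_gt (hpos γ hγ)
      field_simp
    rw [h2, two_smul] at h
    have : γ - (γ + γ) = -γ := by abel
    rwa [this] at h
  -- ### monotonicity of the cascade sets
  have hsub : ∀ i, i + 1 < q → ∀ k ∈ Pi' (i+1), k ∈ Pi' i ∧ ⟪α i, b k⟫ = 0 := by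
    intro i hi k hk
    rw [hstep i hi] at hk
    exact hk.1
  have hmonoAux : ∀ d i, i + d < q → ∀ k ∈ Pi' (i + d), k ∈ Pi' i := by
    intro d
    induction d with
    | zero => intro i _ k hk; exact hk
    | succ d ih =>
      intro i hi k hk
      have h1 : k ∈ Pi' (i + d) := by
        have := hsub (i + d) (by omega) k (by rw [show i + d + 1 = i + (d+1) by ring]; exact hk)
        exact this.1
      exact ih i (by omega) k h1
  have hmono : ∀ i j, i ≤ j → j < q → ∀ k ∈ Pi' j, k ∈ Pi' i := by
    intro i j hij hj k hk
    obtain ⟨d, rfl⟩ := Nat.exists_eq_add_of_le hij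
    exact hmonoAux d i hj k hk
  have hov : ∀ i j, i < j → j < q → ∀ k ∈ Pi' j, ⟪α i, b k⟫ = 0 := by
    intro i j hij hj k hk
    have h1 : k ∈ Pi' (i+1) := hmono (i+1) j hij hj k hk
    exact (hsub i (lt_of_le_of_lt hij hj) k h1).2
  -- ### support and coordinates of the cascade roots
  have hsupp0 : ∀ i, i < q → ∀ k, k ∉ Pi' i → b.repr (α i) k = 0 := by
    intro i hi k hk
    by_contra h
    exact hk ((hhigh i hi).2.1 (Finset.mem_coe.2 (Finsupp.mem_support_iff.2 h)))
  have hge1 : ∀ i, i < q → ∀ k ∈ Pi' i, (1:ℝ) ≤ b.repr (α i) k := by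
    intro i hi k hk
    have hsupp' : (↑(b.repr (b k)).support : Set ι) ⊆ Pi' i := by
      intro l hl
      rw [Finset.mem_coe, Finsupp.mem_support_iff] at hl
      rw [b.repr_self, Finsupp.single_apply] at hl
      by_cases hlk : k = l
      · exact hlk ▸ hk
      · simp [hlk] at hl
    have := (hhigh i hi).2.2 (b k) (hsimple k) hsupp' k
    rwa [b.repr_self, Finsupp.single_apply, if_pos rfl] at this
  have hαnn : ∀ i, i < q → ∀ k, (0:ℝ) ≤ b.repr (α i) k := by
    intro i hi k
    by_cases hk : k ∈ Pi' i
    · linarith [hge1 i hi k hk]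
    · rw [hsupp0 i hi k hk]
  have hζ1 : ∀ i, i < q → b.repr (α i) ζ = 1 := by
    intro i hi
    have h1 := hge1 i hi ζ (hζmem i hi)
    rcases hcom (α i) (hαR i hi) with h | h | h <;> linarith
  -- ### orthogonality of the cascade roots
  have horth : ∀ i j, i < q → j < q → i ≠ j → ⟪α i, α j⟫ = 0 := by
    have key : ∀ i j, i < j → j < q → ⟪α i, α j⟫ = 0 := by
      intro i j hij hj
      rw [real_inner_comm, hexp (α j) (α i)]
      apply Finset.sum_eq_zero
      intro k _
      by_cases hk : k ∈ Pi' j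
      · rw [real_inner_comm, hov i j hij hj k hk, mul_zero]
      · rw [hsupp0 j hj k hk, zero_mul]
    intro i j hi hj hij
    rcases lt_or_gt_of_ne hij with h | h
    · exact key i j h hj
    · rw [real_inner_comm]; exact key j i h hi
  -- ### dominance of α i within its subsystem
  have hdom : ∀ i, i < q → ∀ k ∈ Pi' i, (0:ℝ) ≤ ⟪α i, b k⟫ := by
    intro i hi k hk
    by_contra hneg'
    push_neg at hneg'
    have hcneg : 2 * ⟪α i, b k⟫ / ⟪b k, b k⟫ < 0 :=
      div_neg_of_neg_of_pos (by linarith) (hb0 k)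
    have hroot := hrefl (b k) (hsimple k) (α i) (hαR i hi)
    have hsupp' : (↑(b.repr (α i - (2 * ⟪α i, b k⟫ / ⟪b k, b k⟫) • b k)).support : Set ι) ⊆ Pi' i := by
      intro l hl
      rw [Finset.mem_coe, Finsupp.mem_support_iff] at hl
      by_contra hlP
      apply hl
      have hlk : k ≠ l := fun h => hlP (h ▸ hk)
      rw [map_sub, map_smul, Finsupp.sub_apply, Finsupp.smul_apply, b.repr_self,
        Finsupp.single_apply, if_neg hlk, hsupp0 i hi l hlP]
      simp
    have hmax := (hhigh i hi).2.2 _ hroot hsupp' k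
    rw [map_sub, map_smul, Finsupp.sub_apply, Finsupp.smul_apply, b.repr_self,
      Finsupp.single_apply, if_pos rfl] at hmax
    simp only [smul_eq_mul, mul_one] at hmax
    linarith
  -- ### all cascade roots are long
  have hsq : ∀ γ ∈ R, ⟪γ, γ⟫ = s^2 ∨ ⟪γ, γ⟫ = 2 * s^2 := by
    intro γ hγ
    rcases hlen γ hγ with hh | hh
    · left; rw [real_inner_self_eq_norm_sq, hh]
    · right
      rw [real_inner_self_eq_norm_sq, hh, mul_pow, Real.sq_sqrt (by norm_num : (0:ℝ) ≤ 2)]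
  have hlong : ∀ i, i < q → ⟪α i, α i⟫ = ⟪b ζ, b ζ⟫ := by
    intro i hi
    rcases hsq (b ζ) (hsimple ζ) with hζs | hζl
    · rcases hsq (α i) (hαR i hi) with h | h
      · rw [h, hζs]
      · exfalso
        have h1 : ‖α i‖ ≤ ‖b ζ‖ := hζlong (α i) (hαR i hi)
        have h2 : ‖α i‖^2 ≤ ‖b ζ‖^2 := by
          have := norm_nonneg (α i)
          nlinarith [norm_nonneg (b ζ)]
        rw [← real_inner_self_eq_norm_sq, ← real_inner_self_eq_norm_sq, h, hζs] at h2
        nlinarith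
    · rcases hsq (α i) (hαR i hi) with h | h
      swap
      · rw [h, hζl]
      exfalso
      -- the height-maximum argument: take a highest long root supported in Pi' i
      set P : E → Prop := fun γ => γ ∈ R ∧ (∀ k, 0 ≤ b.repr γ k) ∧
        (∀ k, k ∉ Pi' i → b.repr γ k = 0) ∧ ⟪γ, γ⟫ = 2*s^2 with hP
      set ht : E → ℝ := fun γ => ∑ k, b.repr γ k with hht
      have hPζ : P (b ζ) := by
        refine ⟨hsimple ζ, ?_, ?_, hζl⟩
        · intro k; rw [b.repr_self, Finsupp.single_apply]
          split_ifs <;> norm_num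
        · intro k hk
          rw [b.repr_self, Finsupp.single_apply, if_neg]
          intro hzk; exact hk (hzk ▸ hζmem i hi)
      obtain ⟨γ, hγF, hγmax⟩ := Finset.exists_max_image (R.filter P) ht
        ⟨b ζ, Finset.mem_filter.2 ⟨hsimple ζ, hPζ⟩⟩
      rw [Finset.mem_filter] at hγF
      obtain ⟨hγR, -, hγnn, hγout, hγlen⟩ := hγF
      have hmax' : ∀ δ, P δ → ht δ ≤ ht γ := fun δ hδ => hγmax δ (Finset.mem_filter.2 ⟨hδ.1, hδ⟩)
      have hγsupp : (↑(b.repr γ).support : Set ι) ⊆ Pi' i := by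
        intro l hl
        rw [Finset.mem_coe, Finsupp.mem_support_iff] at hl
        by_contra hlP
        exact hl (hγout l hlP)
      have hle : ∀ k, b.repr γ k ≤ b.repr (α i) k := (hhigh i hi).2.2 γ hγR hγsupp
      have hneq : γ ≠ α i := by
        intro hEq
        rw [hEq, h] at hγlen
        nlinarith
      have hhtlt : ht γ < ht (α i) := by
        have hex : ∃ k, b.repr γ k ≠ b.repr (α i) k := by
          by_contra hall
          push_neg at hall
          apply hneq
          apply b.repr.injective
          ext k
          exact hall k
        obtain ⟨k0, hk0⟩ := hex
        exact Finset.sum_lt_sum (fun k _ => hle k)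
          ⟨k0, Finset.mem_univ k0, lt_of_le_of_ne (hle k0) hk0⟩
      have hcge : (0:ℝ) ≤ ⟪γ, α i⟫ := by
        rw [hexp γ (α i)]
        apply Finset.sum_nonneg
        intro k _
        by_cases hk : k ∈ Pi' i
        · have h1 := hdom i hi k hk
          have h2 := hγnn k
          rw [real_inner_comm]
          exact mul_nonneg h2 h1
        · rw [hγout k hk, zero_mul]
      rcases eq_or_lt_of_le hcge with hc0 | hcpos
      · -- orthogonal case : climb up
        have hterm2 : ∃ k, (b.repr (α i) k - b.repr γ k) * ⟪b k, γ⟫ < 0 := by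
          by_contra hall
          push_neg at hall
          have hsum : (0:ℝ) ≤ ∑ k, (b.repr (α i) k - b.repr γ k) * ⟪b k, γ⟫ :=
            Finset.sum_nonneg (fun k _ => hall k)
          have hval : ∑ k, (b.repr (α i) k - b.repr γ k) * ⟪b k, γ⟫ = -(2*s^2) := by
            have h2 := hexp (α i - γ) γ
            rw [inner_sub_left, real_inner_comm γ (α i), ← hc0, hγlen] at h2
            have h3 : ∑ k, (b.repr (α i) k - b.repr γ k) * ⟪b k, γ⟫
                = ∑ k, (b.repr (α i - γ)) k * ⟪b k, γ⟫ := by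
              apply Finset.sum_congr rfl
              intro k _
              rw [map_sub, Finsupp.sub_apply]
            rw [h3, ← h2]
            ring
          rw [hval] at hsum
          nlinarith
        obtain ⟨k, hk⟩ := hterm2
        have hd1 : 0 ≤ b.repr (α i) k - b.repr γ k := by linarith [hle k]
        have hbkγ : ⟪b k, γ⟫ < 0 := by
          rcases lt_trichotomy (⟪b k, γ⟫) 0 with hlt | hEq | hgt
          · exact hlt
          · rw [hEq] at hk; simp at hk
          · nlinarith
        have hkPi : k ∈ Pi' i := by
          by_contra hkP
          rw [hsupp0 i hi k hkP, hγout k hkP] at hk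
          simp at hk
        set m : ℝ := -(2 * ⟪γ, b k⟫ / ⟪b k, b k⟫) with hm
        have hγbk : ⟪γ, b k⟫ < 0 := by rwa [real_inner_comm] at hbkγ
        have hm0 : 0 < m := by
          rw [hm]
          have := hb0 k
          have : 2 * ⟪γ, b k⟫ / ⟪b k, b k⟫ < 0 := div_neg_of_neg_of_pos (by linarith) (hb0 k)
          linarith
        have hγ1 : γ + m • b k ∈ R := by
          have := hrefl (b k) (hsimple k) γ hγR
          rwa [show γ - (2*⟪γ, b k⟫/⟪b k, b k⟫) • b k = γ + m • b k by
            rw [hm, neg_smul, sub_eq_add_neg]] at this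
        have hbkne : ⟪b k, b k⟫ ≠ 0 := ne_of_gt (hb0 k)
        have hP1 : P (γ + m • b k) := by
          refine ⟨hγ1, ?_, ?_, ?_⟩
          · intro l
            rw [map_add, map_smul, Finsupp.add_apply, Finsupp.smul_apply, b.repr_self,
              Finsupp.single_apply]
            split_ifs with hkl
            · simp only [smul_eq_mul, mul_one]
              linarith [hγnn l]
            · simp only [smul_eq_mul, mul_zero, add_zero]
              exact hγnn l
          · intro l hl
            have hkl : k ≠ l := fun hEq => hl (hEq ▸ hkPi)
            rw [map_add, map_smul, Finsupp.add_apply, Finsupp.smul_apply, b.repr_self,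
              Finsupp.single_apply, if_neg hkl, hγout l hl]
            simp
          · rw [real_inner_add_add_self, real_inner_smul_right, real_inner_smul_left,
              real_inner_smul_right]
            have key : 2*(m*⟪γ, b k⟫) + m*(m*⟪b k, b k⟫) = 0 := by
              rw [hm]; field_simp; ring
            linarith [hγlen]
        have hhtval : ht (γ + m • b k) = ht γ + m := by
          rw [hht]
          simp only
          have : ∀ l, b.repr (γ + m • b k) l = b.repr γ l + m * (b.repr (b k)) l := by
            intro l
            rw [map_add, map_smul, Finsupp.add_apply, Finsupp.smul_apply, smul_eq_mul]
          rw [Finset.sum_congr rfl (fun l _ => this l), Finset.sum_add_distrib,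
            ← Finset.mul_sum]
          have : ∑ l, (b.repr (b k)) l = 1 := by
            rw [b.repr_self]
            rw [Finset.sum_eq_single k]
            · rw [Finsupp.single_apply, if_pos rfl]
            · intro l _ hlk
              rw [Finsupp.single_apply, if_neg (Ne.symm hlk)]
            · intro hku; exact absurd (Finset.mem_univ k) hku
          rw [this, mul_one]
        have := hmax' _ hP1
        rw [hhtval] at this
        linarith
      · -- positive case: reflect to get a higher long root
        obtain ⟨z2, hz2⟩ := hintR γ hγR (α i) (hαR i hi)
        have hsne : s ≠ 0 := ne_of_gt hs
        have hz2v : (z2:ℝ) = ⟪γ, α i⟫ / s^2 := by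
          rw [← hz2, hγlen, real_inner_comm γ (α i)]
          field_simp
        have hz2pos : (0:ℝ) < z2 := by
          rw [hz2v]
          positivity
        have hz2ge1 : (1:ℝ) ≤ (z2:ℝ) := by
          have : (0:ℤ) < z2 := by exact_mod_cast hz2pos
          exact_mod_cast this
        have hnγ : ‖γ‖ = Real.sqrt 2 * s := by
          rcases hlen γ hγR with hh | hh
          · exfalso
            rw [real_inner_self_eq_norm_sq, hh] at hγlen
            nlinarith
          · exact hh
        have hnα : ‖α i‖ = s := by
          rcases hlen (α i) (hαR i hi) with hh | hh
          · exact hh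
          · exfalso
            rw [real_inner_self_eq_norm_sq, hh, mul_pow,
              Real.sq_sqrt (by norm_num : (0:ℝ) ≤ 2)] at h
            nlinarith
        have hs2lt : Real.sqrt 2 < 2 := by
          nlinarith [Real.sq_sqrt (show (0:ℝ) ≤ 2 by norm_num), Real.sqrt_nonneg 2]
        have hCS : ⟪γ, α i⟫ ≤ Real.sqrt 2 * s * s := by
          have := real_inner_le_norm γ (α i)
          rwa [hnγ, hnα] at this
        have hz2lt2 : (z2:ℝ) < 2 := by
          rw [hz2v]
          have hmul : Real.sqrt 2 * (s*s) < 2 * (s*s) := mul_lt_mul_of_pos_right hs2lt (mul_pos hs hs)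
          rw [div_lt_iff₀ (by positivity)]
          linarith [hCS, hmul]
        have hz2eq : (z2:ℝ) = 1 := by
          have h1 : (1:ℤ) ≤ z2 := by exact_mod_cast hz2ge1
          have h2 : z2 < (2:ℤ) := by exact_mod_cast hz2lt2
          have : z2 = 1 := by omega
          exact_mod_cast this
        have hcval : ⟪γ, α i⟫ = s^2 := by
          rw [hz2eq] at hz2v
          field_simp at hz2v
          linarith
        have hcoef : 2 * ⟪γ, α i⟫ / ⟪α i, α i⟫ = 2 := by
          rw [hcval, h]
          field_simp
        have hroot2 := hrefl (α i) (hαR i hi) γ hγR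
        rw [hcoef] at hroot2
        have hroot3 : (2:ℝ) • α i - γ ∈ R := by
          have := hneg _ hroot2
          rwa [neg_sub] at this
        have hP2 : P ((2:ℝ) • α i - γ) := by
          refine ⟨hroot3, ?_, ?_, ?_⟩
          · intro l
            rw [map_sub, map_smul, Finsupp.sub_apply, Finsupp.smul_apply, smul_eq_mul]
            linarith [hle l, hαnn i hi l]
          · intro l hl
            rw [map_sub, map_smul, Finsupp.sub_apply, Finsupp.smul_apply, smul_eq_mul,
              hsupp0 i hi l hl, hγout l hl]
            ring
          · rw [real_inner_sub_sub_self, real_inner_smul_left, real_inner_smul_right,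
              real_inner_smul_left, real_inner_comm γ (α i), h, hγlen, hcval]
            ring
        have hht2 : ht ((2:ℝ) • α i - γ) = 2 * ht (α i) - ht γ := by
          rw [hht]
          simp only
          rw [Finset.sum_congr rfl (fun l _ => by
            rw [map_sub, map_smul, Finsupp.sub_apply, Finsupp.smul_apply, smul_eq_mul] :
            ∀ l ∈ Finset.univ, b.repr ((2:ℝ) • α i - γ) l = 2 * b.repr (α i) l - b.repr γ l)]
          rw [Finset.sum_sub_distrib, ← Finset.mul_sum]
        have := hmax' _ hP2
        rw [hht2] at this
        linarith
  -- ### pairing of the fundamental weight with basis vectors and cascade roots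
  have hϖb : ∀ k : ι, ⟪ϖ, b k⟫ = (if k = ζ then 1 else 0) * (⟪b ζ, b ζ⟫ / 2) := by
    intro k
    have hk := hϖ k
    have hne : ⟪b k, b k⟫ ≠ 0 := ne_of_gt (hb0 k)
    split_ifs with hkζ
    · subst hkζ
      rw [if_pos rfl] at hk
      field_simp at hk
      linarith
    · rw [if_neg hkζ] at hk
      rw [div_eq_iff hne] at hk
      simp only [zero_mul] at hk
      have : ⟪ϖ, b k⟫ = 0 := by linarith
      rw [this]
      ring
  have hϖα : ∀ i, i < q → ⟪ϖ, α i⟫ = ⟪b ζ, b ζ⟫ / 2 := by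
    intro i hi
    rw [real_inner_comm, hexp (α i) ϖ]
    have hcongr : ∀ k ∈ Finset.univ, b.repr (α i) k * ⟪b k, ϖ⟫
        = b.repr (α i) k * ((if k = ζ then 1 else 0) * (⟪b ζ, b ζ⟫ / 2)) := by
      intro k _
      rw [real_inner_comm, hϖb k]
    rw [Finset.sum_congr rfl hcongr]
    rw [Finset.sum_eq_single ζ]
    · rw [hζ1 i hi, if_pos rfl]
      ring
    · intro l _ hlζ
      rw [if_neg hlζ]
      ring
    · intro hζu
      exact absurd (Finset.mem_univ ζ) hζu
  -- ### the product of the commuting reflections, as an explicit formula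
  set c : ℕ → E → ℝ := fun j x => 2 * ⟪x, α j⟫ / ⟪α j, α j⟫ with hcdef
  have hWR : ∀ m, m ≤ q → ∀ β ∈ R, β - ∑ j ∈ Finset.range m, c j β • α j ∈ R := by
    intro m
    induction m with
    | zero => intro _ β hβ; simpa using hβ
    | succ m ih =>
      intro hm β hβ
      have hmq : m < q := hm
      have hβ' : β - c m β • α m ∈ R := by
        have := hrefl (α m) (hαR m hmq) β hβ
        simpa only [hcdef] using this
      have hceq : ∀ j, j < m → c j (β - c m β • α m) = c j β := by
        intro j hj
        have h0 : ⟪α m, α j⟫ = 0 := horth m j hmq (lt_trans hj hmq) (Nat.ne_of_gt hj)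
        simp only [hcdef]
        rw [inner_sub_left, real_inner_smul_left, h0]
        ring_nf
      have hmem := ih (le_of_lt hm) _ hβ'
      have heq : (β - c m β • α m) - ∑ j ∈ Finset.range m, c j (β - c m β • α m) • α j
          = β - ∑ j ∈ Finset.range (m+1), c j β • α j := by
        rw [Finset.sum_congr rfl (fun j hj => by
          rw [hceq j (Finset.mem_range.1 hj)] :
          ∀ j ∈ Finset.range m, c j (β - c m β • α m) • α j = c j β • α j)]
        rw [Finset.sum_range_succ]
        abel
      rwa [heq] at hmem
  have hWinner : ∀ x : E, ∀ j, j < q →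
      ⟪x - ∑ l ∈ Finset.range q, c l x • α l, α j⟫ = -⟪x, α j⟫ := by
    intro x j hj
    rw [inner_sub_left, sum_inner]
    rw [Finset.sum_eq_single j]
    · rw [real_inner_smul_left]
      simp only [hcdef]
      have hdne : ⟪α j, α j⟫ ≠ 0 := ne_of_gt (hpos _ (hαR j hj))
      field_simp
      ring
    · intro l hl hlj
      rw [real_inner_smul_left, horth l j (Finset.mem_range.1 hl) hj hlj, mul_zero]
    · intro hju
      exact absurd (Finset.mem_range.2 hj) hju
  have hWrepr : ∀ x : E, b.repr (x - ∑ l ∈ Finset.range q, c l x • α l) ζ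
      = b.repr x ζ - ∑ l ∈ Finset.range q, c l x := by
    intro x
    rw [map_sub, Finsupp.sub_apply, map_sum, Finsupp.coe_finset_sum, Finset.sum_apply]
    congr 1
    apply Finset.sum_congr rfl
    intro l hl
    rw [map_smul, Finsupp.smul_apply, hζ1 l (Finset.mem_range.1 hl), smul_eq_mul, mul_one]
  -- ### roots with ζ-coefficient one pair nonnegatively with all cascade roots
  have hO1 : ∀ u ∈ R, b.repr u ζ = 1 → ∀ j, j < q → (0:ℝ) ≤ ⟪u, α j⟫ := by
    intro u hu huζ j hj
    have hroot := hrefl (α j) (hαR j hj) u hu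
    have hrepr : b.repr (u - (2*⟪u, α j⟫/⟪α j, α j⟫) • α j) ζ
        = 1 - 2*⟪u, α j⟫/⟪α j, α j⟫ := by
      rw [map_sub, Finsupp.sub_apply, map_smul, Finsupp.smul_apply, huζ, hζ1 j hj,
        smul_eq_mul, mul_one]
    have hc := hcom _ hroot
    rw [hrepr] at hc
    have h2 : 0 ≤ 2*⟪u, α j⟫/⟪α j, α j⟫ := by
      rcases hc with hcv | hcv | hcv <;> linarith
    have hdpos := hpos (α j) (hαR j hj)
    by_contra hlt
    push_neg at hlt
    have : 2*⟪u, α j⟫/⟪α j, α j⟫ < 0 := div_neg_of_neg_of_pos (by linarith) hdpos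
    linarith
  -- ### termination gives strict positivity at ζ
  have htp : (0:ℝ) < ⟪b ζ, α (q-1)⟫ := by
    have h1 : (0:ℝ) ≤ ⟪α (q-1), b ζ⟫ := hdom (q-1) (by omega) ζ (hζmem (q-1) (by omega))
    rcases lt_or_eq_of_le h1 with h2 | h2
    · rwa [real_inner_comm]
    · exact absurd h2.symm hterm
  -- ### the first nonvanishing pairing of a simple root with the cascade is nonnegative
  have hfirst : ∀ k : ι, ∀ j0, j0 < q → (∀ j, j < j0 → ⟪b k, α j⟫ = 0) →
      (0:ℝ) ≤ ⟪b k, α j0⟫ := by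
    intro k j0 hj0 hz
    have main : ∀ j, j ≤ j0 →
        (k ∈ Pi' j ∨ ∀ j', j ≤ j' → j' < q → ⟪b k, α j'⟫ = 0) := by
      intro j
      induction j with
      | zero =>
        intro _
        left
        rw [hPi0]
        trivial
      | succ j ih =>
        intro hjj0
        rcases ih (by omega) with hkj | hr
        · have hj1q : j + 1 < q := by omega
          have hkj0 : ⟪α j, b k⟫ = 0 := by
            rw [real_inner_comm]
            exact hz j (by omega)
          by_cases hk1 : k ∈ Pi' (j+1)
          · left; exact hk1
          · right
            intro j' h1 h2
            rw [real_inner_comm, hexp (α j') (b k)]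
            apply Finset.sum_eq_zero
            intro l _
            by_cases hl : l ∈ Pi' j'
            · have hlj1 : l ∈ Pi' (j+1) := hmono (j+1) j' h1 h2 l hl
              have hbk : ⟪b l, b k⟫ = 0 := by
                by_contra hne
                apply hk1
                rw [hstep j hj1q] at hlj1 ⊢
                simp only [Set.mem_setOf_eq] at hlj1 ⊢
                refine ⟨⟨hkj, hkj0⟩, ?_⟩
                exact Relation.ReflTransGen.tail hlj1.2 ⟨hlj1.1, ⟨hkj, hkj0⟩, hne⟩
              rw [hbk, mul_zero]
            · rw [hsupp0 j' h2 l hl, zero_mul]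
        · right
          intro j' h1 h2
          exact hr j' (by omega) h2
    rcases main j0 le_rfl with hk | hr
    · rw [real_inner_comm]
      exact hdom j0 hj0 k hk
    · rw [hr j0 le_rfl hj0]
  -- ### the key inequality
  have hSge : ∀ k : ι, (if k = ζ then (1:ℝ) else 0) ≤ ∑ j ∈ Finset.range q, c j (b k) := by
    intro k
    have huR : b k - ∑ j ∈ Finset.range q, c j (b k) • α j ∈ R :=
      hWR q le_rfl (b k) (hsimple k)
    have hreprU : b.repr (b k - ∑ j ∈ Finset.range q, c j (b k) • α j) ζ
        = (if k = ζ then 1 else 0) - ∑ j ∈ Finset.range q, c j (b k) := by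
      rw [hWrepr (b k), b.repr_self, Finsupp.single_apply]
    rcases hcom _ huR with hval | hval | hval
    · rw [hreprU] at hval
      split_ifs at hval ⊢ <;> linarith
    · rw [hreprU] at hval
      split_ifs at hval ⊢ <;> linarith
    · -- the bad case: the image root would have ζ-coefficient one
      exfalso
      have hOall : ∀ j, j < q → ⟪b k, α j⟫ ≤ 0 := by
        intro j hj
        have h0 := hO1 _ huR hval j hj
        have h2 := hWinner (b k) j hj
        linarith
      by_cases hkζ : k = ζ
      · subst hkζ
        have := hOall (q-1) (by omega)
        linarith
      · have hS : ∑ j ∈ Finset.range q, c j (b k) = -1 := by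
          rw [hreprU, if_neg hkζ] at hval
          linarith
        have hex : ∃ j, j < q ∧ ⟪b k, α j⟫ ≠ 0 := by
          by_contra hall
          push_neg at hall
          have hzero : ∀ j ∈ Finset.range q, c j (b k) = 0 := by
            intro j hj
            simp only [hcdef]
            rw [hall j (Finset.mem_range.1 hj)]
            ring_nf
          rw [Finset.sum_eq_zero hzero] at hS
          norm_num at hS
        have hfound := Nat.find_spec hex
        have hzero : ∀ j, j < Nat.find hex → ⟪b k, α j⟫ = 0 := by
          intro j hj
          by_contra hne
          exact Nat.find_min hex hj ⟨by omega, hne⟩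
        have hge := hfirst k (Nat.find hex) hfound.1 hzero
        have hle' := hOall (Nat.find hex) hfound.1
        exact hfound.2 (le_antisymm hle' hge)
  -- ### part 1
  have part1 : ∀ k : ι, 2 * ⟪ϖ - ∑ j ∈ Finset.range q, α j, b k⟫ / ⟪b k, b k⟫ ≤ 0 := by
    intro k
    have hnum : ⟪ϖ - ∑ j ∈ Finset.range q, α j, b k⟫
        = ((if k = ζ then 1 else 0) - ∑ j ∈ Finset.range q, c j (b k)) * (⟪b ζ, b ζ⟫/2) := by
      rw [inner_sub_left, sum_inner]
      have hterm' : ∀ j ∈ Finset.range q, ⟪α j, b k⟫ = c j (b k) * (⟪b ζ, b ζ⟫/2) := by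
        intro j hj
        have hjq := Finset.mem_range.1 hj
        simp only [hcdef]
        rw [hlong j hjq, real_inner_comm (b k) (α j)]
        have hLne : ⟪b ζ, b ζ⟫ ≠ 0 := ne_of_gt (hb0 ζ)
        field_simp
      rw [Finset.sum_congr rfl hterm', hϖb k, ← Finset.sum_mul]
      ring
    have hfac := hSge k
    have hL : (0:ℝ) < ⟪b ζ, b ζ⟫ := hb0 ζ
    have hnum2 : ⟪ϖ - ∑ j ∈ Finset.range q, α j, b k⟫ ≤ 0 := by
      rw [hnum]
      apply mul_nonpos_of_nonpos_of_nonneg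
      · split_ifs at hfac ⊢ <;> linarith
      · linarith
    exact div_nonpos_iff.2 (Or.inr ⟨by linarith, (hb0 k).le⟩)
  -- ### part 2 : the isometry given by the product of the commuting reflections
  have hcx : ∀ (j : ℕ) (x : E), c j x = 2 * ⟪x, α j⟫ / ⟪α j, α j⟫ := fun j x => rfl
  have hWadd : ∀ x y : E, (x + y) - ∑ j ∈ Finset.range q, c j (x+y) • α j
      = (x - ∑ j ∈ Finset.range q, c j x • α j) + (y - ∑ j ∈ Finset.range q, c j y • α j) := by
    intro x y
    rw [Finset.sum_congr rfl (fun j hj => by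
      rw [hcx j (x+y), hcx j x, hcx j y, inner_add_left, ← add_smul]
      congr 1
      ring :
      ∀ j ∈ Finset.range q, c j (x+y) • α j = c j x • α j + c j y • α j)]
    rw [Finset.sum_add_distrib]
    abel
  have hWsmul : ∀ (r : ℝ) (x : E), (r • x) - ∑ j ∈ Finset.range q, c j (r • x) • α j
      = r • (x - ∑ j ∈ Finset.range q, c j x • α j) := by
    intro r x
    rw [Finset.sum_congr rfl (fun j hj => by
      rw [hcx j (r • x), hcx j x, real_inner_smul_left, smul_smul]
      congr 1
      ring :
      ∀ j ∈ Finset.range q, c j (r • x) • α j = r • (c j x • α j))]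
    rw [← Finset.smul_sum, ← smul_sub]
  have hcW : ∀ (x : E) (j : ℕ), j < q →
      c j (x - ∑ l ∈ Finset.range q, c l x • α l) = -(c j x) := by
    intro x j hj
    rw [hcx j _, hWinner x j hj, hcx j x]
    ring
  have hWW : ∀ x : E, (x - ∑ l ∈ Finset.range q, c l x • α l)
      - ∑ j ∈ Finset.range q, c j (x - ∑ l ∈ Finset.range q, c l x • α l) • α j = x := by
    intro x
    rw [Finset.sum_congr rfl (fun j hj => by
      rw [hcW x j (Finset.mem_range.1 hj), neg_smul] :
      ∀ j ∈ Finset.range q, c j (x - ∑ l ∈ Finset.range q, c l x • α l) • α j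
        = -(c j x • α j))]
    rw [Finset.sum_neg_distrib]
    abel
  have hWnorm : ∀ x : E, ⟪x - ∑ l ∈ Finset.range q, c l x • α l,
      x - ∑ l ∈ Finset.range q, c l x • α l⟫ = ⟪x, x⟫ := by
    intro x
    have hA1 : ⟪x - ∑ l ∈ Finset.range q, c l x • α l, x⟫
        = ⟪x, x⟫ - ∑ l ∈ Finset.range q, c l x * ⟪x, α l⟫ := by
      rw [inner_sub_left, sum_inner]
      congr 1
      apply Finset.sum_congr rfl
      intro l _
      rw [real_inner_smul_left, real_inner_comm x (α l)]
    have hA2 : ⟪x - ∑ l ∈ Finset.range q, c l x • α l,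
        x - ∑ l ∈ Finset.range q, c l x • α l⟫
        = ⟪x - ∑ l ∈ Finset.range q, c l x • α l, x⟫
          - ∑ l ∈ Finset.range q, c l x * (-⟪x, α l⟫) := by
      rw [inner_sub_right, inner_sum]
      congr 1
      apply Finset.sum_congr rfl
      intro l hl
      rw [real_inner_smul_right, hWinner x l (Finset.mem_range.1 hl)]
    rw [hA2, hA1]
    have : ∑ l ∈ Finset.range q, c l x * (-⟪x, α l⟫)
        = -∑ l ∈ Finset.range q, c l x * ⟪x, α l⟫ := by
      rw [← Finset.sum_neg_distrib]
      apply Finset.sum_congr rfl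
      intro l _
      ring
    rw [this]
    ring
  have hcϖ : ∀ j ∈ Finset.range q, c j ϖ • α j = α j := by
    intro j hj
    have hjq := Finset.mem_range.1 hj
    have hone : c j ϖ = 1 := by
      rw [hcx, hϖα j hjq, hlong j hjq]
      have : ⟪b ζ, b ζ⟫ ≠ 0 := ne_of_gt (hb0 ζ)
      field_simp
    rw [hone, one_smul]
  refine ⟨part1,
    ⟨{ toLinearEquiv :=
        { toFun := fun x => x - ∑ j ∈ Finset.range q, c j x • α j
          map_add' := hWadd
          map_smul' := hWsmul
          invFun := fun x => x - ∑ j ∈ Finset.range q, c j x • α j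
          left_inv := hWW
          right_inv := hWW }
       norm_map' := ?_ }, ?_, ?_⟩⟩
  · intro x
    show ‖x - ∑ j ∈ Finset.range q, c j x • α j‖ = ‖x‖
    have h2 := hWnorm x
    rw [real_inner_self_eq_norm_sq, real_inner_self_eq_norm_sq] at h2
    rw [← Real.sqrt_sq (norm_nonneg (x - ∑ j ∈ Finset.range q, c j x • α j)),
      ← Real.sqrt_sq (norm_nonneg x), h2]
  · intro β hβ
    show β - ∑ j ∈ Finset.range q, c j β • α j ∈ R
    exact hWR q le_rfl β hβ
  · show ϖ - ∑ j ∈ Finset.range q, c j ϖ • α j = ϖ - ∑ j ∈ Finset.range q, α j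
    rw [Finset.sum_congr rfl hcϖ]
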